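/- arXiv:1904.08187 — 2 statements merged into one kernel-verified Lean document; each statement's English description precedes it below -/
import Mathlib

section
/- If s000t is a word of odd length n > 4 all of whose conjugates contain at most one occurrence of 000 as a factor, then for every i ≥ 0, the word s000t is bordered if and only if s0^{i+3}t is bordered. -/
open List

/-- `x` is a border of `w`: nonempty, proper, both a prefix and a suffix. -/
def IsBorder {α : Type*} (x w : List α) : Prop :=
  x ≠ [] ∧ x ≠ w ∧ x <+: w ∧ x <:+ w

/-- A word is bordered if it has a border. -/
def Bordered {α : Type*} (w : List α) : Prop := ∃ x, IsBorder x w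

/-- A word is unbordered if it has no border. -/
def Unbordered {α : Type*} (w : List α) : Prop := ¬ Bordered w

/-- `u` and `v` are conjugates. -/
def ConjWord {α : Type*} (u v : List α) : Prop := ∃ x y, u = x ++ y ∧ v = y ++ x

open Classical in
noncomputable def nuc {α : Type*} (w : List α) : ℕ :=
  ((Finset.range w.length).filter fun i => Unbordered (w.rotate i)).card

/-- `w` contains a square `xx` with `x` nonempty as a factor. -/
def HasSquare {α : Type*} (w : List α) : Prop := ∃ x : List α, x ≠ [] ∧ (x ++ x) <:+: w

/-- `w` is squarefree. -/
def SquarefreeWord {α : Type*} (w : List α) : Prop := ¬ HasSquare w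

/-- `w` is circularly squarefree: every conjugate is squarefree. -/
def CircSF {α : Type*} (w : List α) : Prop := ∀ u, ConjWord w u → SquarefreeWord u

/-- `w` is primitive: not a power `y^e` with `e ≥ 2`. -/
def Primitive {α : Type*} (w : List α) : Prop :=
  ¬ ∃ (y : List α) (e : ℕ), 2 ≤ e ∧ w = (List.replicate e y).flatten

/-- an occurrence of `000` starting at position `i` of `u`. -/
def OccursAt (u : List (Fin 2)) (i : ℕ) : Prop := (u.drop i).take 3 = [0, 0, 0]

lemma occ_len {u : List (Fin 2)} {p : ℕ} (h : OccursAt u p) : p + 3 ≤ u.length := by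
  have := congrArg List.length h
  simp [List.length_take, List.length_drop] at this
  omega

lemma occ_prefix_iff {x u : List (Fin 2)} {p : ℕ} (h : x <+: u) (hp : p + 3 ≤ x.length) :
    OccursAt x p ↔ OccursAt u p := by
  have hx : x = u.take x.length := List.prefix_iff_eq_take.mp h
  unfold OccursAt
  rw [hx, List.drop_take, List.take_take]
  have : 3 ⊓ (x.length - p) = 3 := by omega
  rw [this]

lemma occ_suffix_iff {x y u : List (Fin 2)} {p : ℕ} (h : y ++ x = u) :
    OccursAt x p ↔ OccursAt u (y.length + p) := by
  unfold OccursAt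
  rw [← h, List.drop_length_add_append]

lemma occ_reverse {u : List (Fin 2)} {p : ℕ} (hp : p + 3 ≤ u.length) :
    OccursAt u.reverse p ↔ OccursAt u (u.length - 3 - p) := by
  unfold OccursAt
  have h1 : u.reverse.drop p = (u.take (u.length - p)).reverse := by
    rw [List.reverse_take]; congr 1; omega
  rw [h1, List.take_reverse, List.drop_take]
  have h3 : (u.take (u.length - p)).length = u.length - p := by
    simp [List.length_take]
  rw [h3]
  have h4 : u.length - p - (u.length - p - 3) = 3 := by omega
  have h5 : u.length - p - 3 = u.length - 3 - p := by omega
  rw [h4, h5, List.reverse_eq_iff]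
  rfl

lemma take3_eq (u v : List (Fin 2)) (k : ℕ) (hk : 3 ≤ k) :
    ((u ++ replicate k 0) ++ v).take 3 = (u ++ replicate 3 0).take 3 := by
  rw [List.take_append (l₁ := u ++ replicate k 0)]
  have e1 : 3 - (u ++ replicate k 0).length = 0 := by
    simp only [List.length_append, List.length_replicate]; omega
  rw [e1, List.take_zero, List.append_nil,
    List.take_append (l₁ := u), List.take_replicate,
    List.take_append (l₁ := u), List.take_replicate]
  congr 2
  omega

lemma occ_mid (s t : List (Fin 2)) (k p : ℕ) (hk : 3 ≤ k)
    (hp1 : s.length ≤ p) (hp2 : p ≤ s.length + k - 3) :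
    OccursAt (s ++ replicate k 0 ++ t) p := by
  unfold OccursAt
  rw [List.drop_append (l₁ := s ++ replicate k 0)]
  have e1 : p - (s ++ replicate k 0).length = 0 := by
    simp only [List.length_append, List.length_replicate]; omega
  have e2 : s.drop p = [] := by rw [List.drop_eq_nil_iff]; omega
  rw [e1, List.drop_zero, List.drop_append (l₁ := s), List.drop_replicate,
    e2, List.nil_append,
    List.take_append_of_le_length (by simp only [List.length_replicate]; omega),
    List.take_replicate]
  have e3 : 3 ⊓ (k - (p - s.length)) = 3 := by omega
  rw [e3]
  rfl

lemma occ_low (s t : List (Fin 2)) (k p : ℕ) (hk : 3 ≤ k) (hp : p ≤ s.length) :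
    (OccursAt (s ++ replicate k 0 ++ t) p ↔ OccursAt (s ++ replicate 3 0 ++ t) p) := by
  unfold OccursAt
  have hdrop : ∀ m : ℕ, 3 ≤ m → (s ++ replicate m 0 ++ t).drop p
      = (s.drop p ++ replicate m 0) ++ t := by
    intro m hm
    rw [List.drop_append (l₁ := s ++ replicate m 0)]
    have e1 : p - (s ++ replicate m 0).length = 0 := by
      simp only [List.length_append, List.length_replicate]; omega
    have e2 : p - s.length = 0 := by omega
    rw [e1, List.drop_zero, List.drop_append (l₁ := s), e2, List.drop_zero]
  rw [hdrop k hk, hdrop 3 le_rfl, take3_eq _ _ _ hk, take3_eq _ _ _ le_rfl]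

lemma occ_high (s t : List (Fin 2)) (k p : ℕ) (hk : 3 ≤ k) (hp : s.length + k - 3 ≤ p) :
    (OccursAt (s ++ replicate k 0 ++ t) p ↔ OccursAt (s ++ replicate 3 0 ++ t) (p - (k - 3))) := by
  unfold OccursAt
  have hdrop : ∀ (m q : ℕ), 3 ≤ m → s.length + m - 3 ≤ q → (s ++ replicate m 0 ++ t).drop q
      = replicate (s.length + m - q) 0 ++ t.drop (q - (s.length + m)) := by
    intro m q hm hq
    rw [List.drop_append (l₁ := s ++ replicate m 0),
      List.drop_append (l₁ := s), List.drop_replicate]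
    have e2 : s.drop q = [] := by rw [List.drop_eq_nil_iff]; omega
    rw [e2, List.nil_append]
    congr 2
    · omega
    · simp only [List.length_append, List.length_replicate]
  rw [hdrop k p hk hp, hdrop 3 (p - (k-3)) le_rfl (by omega)]
  have e3 : s.length + k - p = s.length + 3 - (p - (k - 3)) := by omega
  have e4 : p - (s.length + k) = p - (k - 3) - (s.length + 3) := by omega
  rw [e3, e4]

lemma hocc_k (s t : List (Fin 2))
    (F1 : ∀ p, OccursAt (s ++ replicate 3 0 ++ t) p → p = s.length)
    (k : ℕ) (hk : 3 ≤ k) :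
    ∀ p, OccursAt (s ++ replicate k 0 ++ t) p ↔ (s.length ≤ p ∧ p ≤ s.length + k - 3) := by
  intro p
  constructor
  · intro h
    rcases le_or_gt p s.length with hle | hgt
    · have := F1 p ((occ_low s t k p hk hle).1 h)
      omega
    · by_cases h2 : p ≤ s.length + k - 3
      · exact ⟨by omega, h2⟩
      · push_neg at h2
        have := F1 _ ((occ_high s t k p hk (by omega)).1 h)
        omega
  · rintro ⟨h1, h2⟩
    exact occ_mid s t k p hk h1 h2

lemma key (s t : List (Fin 2)) (k : ℕ) (hk : 3 ≤ k)
    (h4 : 4 < s.length + 3 + t.length)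
    (hocc : ∀ p, OccursAt (s ++ replicate k 0 ++ t) p ↔ (s.length ≤ p ∧ p ≤ s.length + k - 3))
    (x : List (Fin 2)) (hb : IsBorder x (s ++ replicate k 0 ++ t)) :
    x.length ≤ s.length + 2 := by
  obtain ⟨hne, hxw, hpre, hsuf⟩ := hb
  have hWlen : (s ++ replicate k 0 ++ t).length = s.length + k + t.length := by simp; omega
  by_contra hcon
  push_neg at hcon
  obtain ⟨y, hy⟩ := hsuf
  have hxlt : x.length < (s ++ replicate k 0 ++ t).length :=
    lt_of_le_of_ne hpre.length_le (fun h => hxw (hpre.eq_of_length h))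
  have hd : y.length + x.length = (s ++ replicate k 0 ++ t).length := by
    rw [← hy]; simp
  have hd1 : 1 ≤ y.length := by omega
  have hWa : OccursAt (s ++ replicate k 0 ++ t) s.length := (hocc s.length).2 ⟨le_refl _, by omega⟩
  have hxa : OccursAt x s.length := (occ_prefix_iff hpre (by omega)).2 hWa
  have h2 : OccursAt (s ++ replicate k 0 ++ t) (y.length + s.length) := (occ_suffix_iff hy).1 hxa
  have hdk : y.length ≤ k - 3 := by have := (hocc _).1 h2; omega
  by_cases hda : y.length ≤ s.length
  · have h3 : OccursAt x (s.length - y.length) := by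
      rw [occ_suffix_iff hy, show y.length + (s.length - y.length) = s.length by omega]
      exact hWa
    have h4' : OccursAt (s ++ replicate k 0 ++ t) (s.length - y.length) :=
      (occ_prefix_iff hpre (by omega)).1 h3
    have := (hocc _).1 h4'
    omega
  · push_neg at hda
    have hWd : OccursAt (s ++ replicate k 0 ++ t) y.length := (hocc y.length).2 ⟨by omega, by omega⟩
    have hx0 : OccursAt x 0 := by
      rw [occ_suffix_iff hy, Nat.add_zero]; exact hWd
    have hW0 : OccursAt (s ++ replicate k 0 ++ t) 0 := (occ_prefix_iff hpre (by omega)).1 hx0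
    have ha0 : s.length = 0 := by have := (hocc 0).1 hW0; omega
    have hs : s = [] := List.length_eq_zero_iff.mp ha0
    subst hs
    simp only [List.nil_append] at hy hpre hocc hWa hWlen hxlt hd ⊢
    -- now word is replicate k 0 ++ t
    set d := y.length with hdd
    -- x = drop d (replicate k 0 ++ t) = replicate (k-d) 0 ++ t
    have hx2 : x = replicate (k - d) 0 ++ t := by
      have : x = (replicate k 0 ++ t).drop d := by rw [← hy, hdd, List.drop_left]
      rw [this, List.drop_append_of_le_length (by simp; omega), List.drop_replicate]
    -- x's prefix of length k-d+1 is all zeros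
    have hxtake : x.take (k - d + 1) = (replicate k 0 ++ t).take (k - d + 1) := by
      have hxx : x = (replicate k 0 ++ t).take x.length := List.prefix_iff_eq_take.mp hpre
      rw [hxx, List.take_take]
      congr 1
      simp at ha0 ⊢
      omega
    have htake1 : t.take 1 = [0] := by
      have e1 : (replicate k 0 ++ t).take (k - d + 1) = replicate (k - d + 1) (0 : Fin 2) := by
        rw [List.take_append_of_le_length (by simp; omega), List.take_replicate]
        congr 1
        omega
      rw [e1, hx2] at hxtake
      rw [List.take_append, List.take_replicate,
        show (k - d + 1) ⊓ (k - d) = k - d by omega,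
        show k - d + 1 - (replicate (k - d) (0:Fin 2)).length = 1 by simp,
        List.replicate_succ'] at hxtake
      exact List.append_cancel_left hxtake
    obtain ⟨t', ht'⟩ : ∃ t', t = 0 :: t' := by
      cases t with
      | nil => simp at htake1
      | cons h tl =>
        refine ⟨tl, ?_⟩
        have hh : h = 0 := by simpa using htake1
        rw [hh]
    have hocc2 : OccursAt (replicate k 0 ++ t) (k - 2) := by
      unfold OccursAt
      rw [List.drop_append_of_le_length (by simp only [List.length_replicate]; omega), List.drop_replicate,
        show k - (k - 2) = 2 by omega, ht']
      rfl
    have := (hocc _).1 hocc2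
    omega

lemma prefix_two (s t : List (Fin 2)) (k : ℕ) (hk : 3 ≤ k) :
    s ++ replicate 2 0 <+: s ++ replicate k 0 ++ t := by
  refine ⟨replicate (k - 2) 0 ++ t, ?_⟩
  have e : replicate 2 (0 : Fin 2) ++ replicate (k - 2) 0 = replicate k 0 := by
    rw [← List.replicate_add]; congr 1; omega
  simp only [List.append_assoc]
  rw [← List.append_assoc (replicate 2 0), e]

lemma suffix_two (s t : List (Fin 2)) (k : ℕ) (hk : 3 ≤ k) :
    replicate 2 0 ++ t <:+ s ++ replicate k 0 ++ t := by
  refine ⟨s ++ replicate (k - 2) 0, ?_⟩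
  have e : replicate (k - 2) (0 : Fin 2) ++ replicate 2 0 = replicate k 0 := by
    rw [← List.replicate_add]; congr 1; omega
  simp only [List.append_assoc]
  rw [← List.append_assoc (replicate (k - 2) 0), e]

lemma transfer (s t x : List (Fin 2)) (k k' : ℕ) (hk : 3 ≤ k) (hk' : 3 ≤ k')
    (hx : IsBorder x (s ++ replicate k 0 ++ t))
    (h1 : x.length ≤ s.length + 2) (h2 : x.length ≤ t.length + 2) :
    IsBorder x (s ++ replicate k' 0 ++ t) := by
  obtain ⟨hne, hxw, hpre, hsuf⟩ := hx
  refine ⟨hne, ?_, ?_, ?_⟩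
  · intro hcon
    have := congrArg List.length hcon
    simp only [List.length_append, List.length_replicate] at this
    omega
  · exact (List.prefix_of_prefix_length_le hpre (prefix_two s t k hk)
      (by simp only [List.length_append, List.length_replicate]; omega)).trans
      (prefix_two s t k' hk')
  · exact (List.suffix_of_suffix_length_le hsuf (suffix_two s t k hk)
      (by simp only [List.length_append, List.length_replicate]; omega)).trans
      (suffix_two s t k' hk')

lemma key_rev (s t : List (Fin 2)) (k : ℕ) (hk : 3 ≤ k)
    (h4 : 4 < s.length + 3 + t.length)
    (hocc : ∀ p, OccursAt (s ++ replicate k 0 ++ t) p ↔ (s.length ≤ p ∧ p ≤ s.length + k - 3))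
    (x : List (Fin 2)) (hb : IsBorder x (s ++ replicate k 0 ++ t)) :
    x.length ≤ t.length + 2 := by
  have hrev : (s ++ replicate k 0 ++ t).reverse = t.reverse ++ replicate k 0 ++ s.reverse := by
    simp [List.reverse_append, List.reverse_replicate, List.append_assoc]
  have hlen : (s ++ replicate k 0 ++ t).length = s.length + k + t.length := by
    simp only [List.length_append, List.length_replicate]
  have hocc' : ∀ p, OccursAt (t.reverse ++ replicate k 0 ++ s.reverse) p ↔
      (t.reverse.length ≤ p ∧ p ≤ t.reverse.length + k - 3) := by
    intro p
    rw [← hrev, List.length_reverse]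
    constructor
    · intro h
      have hp3 : p + 3 ≤ (s ++ replicate k 0 ++ t).length := by
        have := occ_len h
        rwa [List.length_reverse] at this
      have := (hocc _).1 ((occ_reverse hp3).1 h)
      omega
    · rintro ⟨hp1, hp2⟩
      have hp3 : p + 3 ≤ (s ++ replicate k 0 ++ t).length := by omega
      exact (occ_reverse hp3).2 ((hocc _).2 (by omega))
  have hb' : IsBorder x.reverse (t.reverse ++ replicate k 0 ++ s.reverse) := by
    obtain ⟨hne, hxw, hpre, hsuf⟩ := hb
    rw [← hrev]
    exact ⟨by simpa using hne, by rw [Ne, List.reverse_inj]; exact hxw,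
      List.reverse_prefix.2 hsuf, List.reverse_suffix.2 hpre⟩
  have := key t.reverse s.reverse k hk (by simp only [List.length_reverse]; omega) hocc'
    x.reverse hb'
  simpa using this

theorem stmt7 (s t : List (Fin 2)) (n : ℕ)
    (hn : (s ++ [0, 0, 0] ++ t).length = n) (hodd : Odd n) (h4 : 4 < n)
    (honce : ∀ u, ConjWord (s ++ [0, 0, 0] ++ t) u →
      ∀ i j, OccursAt u i → OccursAt u j → i = j) :
    ∀ i : ℕ, (Bordered (s ++ [0, 0, 0] ++ t) ↔
      Bordered (s ++ List.replicate (i + 3) 0 ++ t)) := by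
  intro i
  have hlen := hn
  simp only [List.length_append, List.length_cons, List.length_nil] at hlen
  have F1 : ∀ p, OccursAt (s ++ List.replicate 3 0 ++ t) p → p = s.length := by
    intro p hp
    exact honce _ ⟨s ++ [0, 0, 0] ++ t, [], by simp, by simp⟩ p s.length hp
      (occ_mid s t 3 s.length le_rfl le_rfl (by omega))
  have hocc3 := hocc_k s t F1 3 le_rfl
  have hocck := hocc_k s t F1 (i + 3) (by omega)
  have h4' : 4 < s.length + 3 + t.length := by omega
  constructor
  · rintro ⟨x, hx⟩
    have hx' : IsBorder x (s ++ List.replicate 3 0 ++ t) := hx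
    exact ⟨x, transfer s t x 3 (i + 3) le_rfl (by omega) hx'
      (key s t 3 le_rfl h4' hocc3 x hx') (key_rev s t 3 le_rfl h4' hocc3 x hx')⟩
  · rintro ⟨x, hx⟩
    have hb3 : IsBorder x (s ++ List.replicate 3 0 ++ t) :=
      transfer s t x (i + 3) 3 (by omega) le_rfl hx
        (key s t (i + 3) (by omega) h4' hocck x hx)
        (key_rev s t (i + 3) (by omega) h4' hocck x hx)
    exact ⟨x, hb3⟩
end

section
/- If w' = s000t000 is a binary word of length n > 6 with s and t nonempty, then the four conjugates 00t000s0, 0t000s00, 00s000t0, and 0s000t00 of w' are all bordered, and consequently nuc(w') ≤ ⌊(n-6)/2⌋ + 2 < ⌊n/2⌋. -/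
open List

lemma fin2_cases (x : Fin 2) : x = 0 ∨ x = 1 := by revert x; decide

lemma two_fin_eq (x y z : Fin 2) (hx : x ≠ z) (hy : y ≠ z) : x = y := by
  revert x y z; decide

lemma rot_app {α : Type*} (u v : List α) : (u ++ v).rotate u.length = v ++ u := by
  rw [rotate_eq_drop_append_take (by simp), drop_left, take_left]

lemma bordered_single {α : Type*} (x : α) (m : List α) : Bordered (x :: (m ++ [x])) := by
  refine ⟨[x], by simp, ?_, ⟨m ++ [x], rfl⟩, ⟨x :: m, by simp⟩⟩
  intro h
  apply_fun List.length at h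
  simp at h

lemma bordered_hl {α : Type*} (u : List α) (h2 : 2 ≤ u.length) (h : u.head? = u.getLast?) :
    Bordered u := by
  match u with
  | a :: v =>
    have hv : v ≠ [] := by
      rintro rfl; simp at h2
    have hL : v.getLast hv = a := by
      rw [getLast?_eq_getLast_of_ne_nil (cons_ne_nil a v), getLast_cons hv] at h
      simpa using h.symm
    have he : a :: v = a :: (v.dropLast ++ [a]) := by
      conv_lhs => rw [← dropLast_append_getLast hv, hL]
    rw [he]
    exact bordered_single a v.dropLast

lemma exists_split {α : Type*} [DecidableEq α] (c : α) :
    ∀ v : List α, v = replicate v.length c ∨ ∃ p e z, e ≠ c ∧ v = replicate p c ++ e :: z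
  | [] => Or.inl rfl
  | a :: v => by
    by_cases ha : a = c
    · subst ha
      rcases exists_split a v with h | ⟨p, e, z, he, hz⟩
      · left
        rw [length_cons, replicate_succ]
        exact congrArg _ h
      · right
        exact ⟨p + 1, e, z, he, by rw [replicate_succ, cons_append, hz]⟩
    · right
      exact ⟨0, a, v, ha, rfl⟩

lemma lemA (d : Fin 2) (v : List (Fin 2)) (hv : v ≠ [])
    (h1 : Unbordered (d :: v)) (h2 : Unbordered (v ++ [d])) :
    ∃ c, c ≠ d ∧ v = replicate v.length c := by
  have hvlen : 0 < v.length := length_pos_iff.mpr hv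
  have hlast : v.getLast hv ≠ d := by
    intro hLd
    apply h1
    refine ⟨[d], by simp, ?_, ⟨v, rfl⟩, ⟨d :: v.dropLast, ?_⟩⟩
    · intro h; have hl := congrArg List.length h
      simp only [length_cons, length_nil, length_append] at hl; omega
    · rw [cons_append, ← hLd, dropLast_append_getLast hv]
  have hhead : v.head hv ≠ d := by
    intro hHd
    apply h2
    refine ⟨[d], by simp, ?_, ⟨v.tail ++ [d], ?_⟩, ⟨v, rfl⟩⟩
    · intro h; have hl := congrArg List.length h
      simp only [length_cons, length_nil, length_append] at hl; omega
    · rw [← hHd]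
      simp only [singleton_append, ← cons_append, cons_head_tail hv]
  set c := v.head hv with hc
  have hcd : c ≠ d := hhead
  rcases exists_split c v with hrep | ⟨p, e, z, hec, hz⟩
  · exact ⟨c, hcd, hrep⟩
  have hed : e = d := two_fin_eq e d c hec (Ne.symm hcd)
  rw [hed] at hz; clear hec hed
  rcases exists_split c v.reverse with hrep | ⟨q, e', z', he'c, hz'⟩
  · refine ⟨c, hcd, ?_⟩
    have h := congrArg List.reverse hrep
    rw [reverse_reverse, reverse_replicate, length_reverse] at h
    exact h
  have he'd : e' = d := two_fin_eq e' d c he'c (Ne.symm hcd)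
  rw [he'd] at hz'; clear he'c he'd
  have hv2 : v = z'.reverse ++ [d] ++ replicate q c := by
    have h := congrArg List.reverse hz'
    rw [reverse_reverse, reverse_append, reverse_replicate, reverse_cons] at h
    rw [h, append_assoc]
  set y := z'.reverse with hy
  by_cases hpq : p ≤ q
  · exfalso; apply h2
    refine ⟨replicate p c ++ [d], by simp, ?_, ⟨z ++ [d], ?_⟩, ⟨y ++ [d] ++ replicate (q - p) c, ?_⟩⟩
    · intro h; have hl := congrArg List.length h
      rw [hz] at hl; simp at hl
    · rw [hz]; simp
    · have hq : replicate (q - p) c ++ replicate p c = replicate q c := by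
        rw [← replicate_add]; congr 1; omega
      rw [hv2]; simp only [append_assoc]
      rw [← append_assoc (replicate (q - p) c), hq]
  · exfalso; apply h1
    refine ⟨d :: replicate q c, by simp, ?_, ⟨replicate (p - q) c ++ d :: z, ?_⟩, ⟨d :: y, ?_⟩⟩
    · intro h; have hl := congrArg List.length h
      rw [hv2] at hl; simp at hl; omega
    · have hp : replicate q c ++ replicate (p - q) c = replicate p c := by
        rw [← replicate_add]; congr 1; omega
      rw [hz]; simp only [cons_append, append_assoc]
      rw [← append_assoc (replicate q c), hp]
    · rw [hv2]; simp

lemma noadj (w : List (Fin 2)) (h0 : 2 ≤ w.count 0) (h1 : 2 ≤ w.count 1) (j : ℕ)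
    (hu : Unbordered (w.rotate j)) (hu' : Unbordered (w.rotate (j + 1))) : False := by
  have hwlen : 2 ≤ w.length := le_trans h0 count_le_length
  obtain ⟨d, v, hdv⟩ : ∃ d v, w.rotate j = d :: v := by
    cases hrj : w.rotate j with
    | nil => exfalso; have := congrArg List.length hrj
             rw [length_rotate] at this; simp only [length_nil] at this; omega
    | cons a l => exact ⟨a, l, rfl⟩
  have hvlen : v.length = w.length - 1 := by
    have := congrArg List.length hdv; rw [length_rotate, length_cons] at this; omega
  have hvne : v ≠ [] := by
    intro h; rw [h] at hvlen; simp at hvlen; omega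
  have hrot1 : w.rotate (j + 1) = v ++ [d] := by
    rw [← rotate_rotate, hdv]
    rw [show (1 : ℕ) = 0 + 1 from rfl, rotate_cons_succ, rotate_zero]
  rw [hdv] at hu; rw [hrot1] at hu'
  obtain ⟨c, hcd, hrep⟩ := lemA d v hvne hu hu'
  have hcount : w.count d = 1 := by
    rw [← (rotate_perm w j).count_eq, hdv, hrep]
    rw [count_cons_self, count_replicate]; simp [hcd]
  rcases fin2_cases d with rfl | rfl <;> omega

lemma sparse_card (S : Finset ℕ) (l m : ℕ) (hmem : ∀ j ∈ S, l ≤ j ∧ j < l + m)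
    (hadj : ∀ j, j ∈ S → (j + 1) ∈ S → False) : S.card ≤ (m + 1) / 2 := by
  classical
  have hinj : Set.InjOn (fun j => (j - l) / 2) S := by
    intro x hx y hy hxy
    simp only [Finset.coe_mem, Finset.mem_coe] at hx hy
    by_contra hne
    obtain ⟨hx1, hx2⟩ := hmem x hx
    obtain ⟨hy1, hy2⟩ := hmem y hy
    simp only at hxy
    have : y = x + 1 ∨ x = y + 1 := by omega
    rcases this with h | h
    · exact hadj x hx (h ▸ hy)
    · exact hadj y hy (h ▸ hx)
  calc S.card = (S.image fun j => (j - l) / 2).card := (Finset.card_image_of_injOn hinj).symm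
    _ ≤ (Finset.range ((m + 1) / 2)).card := by
        apply Finset.card_le_card
        intro x hx
        rw [Finset.mem_image] at hx
        obtain ⟨j, hj, rfl⟩ := hx
        obtain ⟨hj1, hj2⟩ := hmem j hj
        rw [Finset.mem_range]
        omega
    _ = (m + 1) / 2 := Finset.card_range _

lemma unb_key (w : List (Fin 2)) (n : ℕ) (hn : w.length = n) (h2 : 2 ≤ n) (j : ℕ) (hj : j < n)
    (hunb : Unbordered (w.rotate j)) :
    w[j]? = some 1 ∨ w[(n - 1 + j) % n]? = some 1 := by
  by_contra hcon
  push_neg at hcon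
  obtain ⟨hc1, hc2⟩ := hcon
  apply hunb
  apply bordered_hl _ (by rw [length_rotate]; omega)
  have hj' : j < w.length := by omega
  have hm : n - 1 < w.length := by omega
  rw [head?_rotate hj', getLast?_eq_getElem?, length_rotate, getElem?_rotate (by omega : w.length - 1 < w.length), hn]
  -- goal : w[j]? = w[(n - 1 + j) % n]?
  have e1 : ∃ x, w[j]? = some x := by
    rw [getElem?_eq_getElem (by omega)]; exact ⟨_, rfl⟩
  have e2 : ∃ x, w[(n - 1 + j) % n]? = some x := by
    rw [getElem?_eq_getElem (by rw [hn]; exact Nat.mod_lt _ (by omega))]; exact ⟨_, rfl⟩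
  obtain ⟨x1, hx1⟩ := e1
  obtain ⟨x2, hx2⟩ := e2
  rw [hx1, hx2]
  rw [hx1] at hc1; rw [hx2] at hc2
  have : x1 = 0 := by rcases fin2_cases x1 with h | h; exact h; exact absurd (by rw [h]) hc1
  have : x2 = 0 := by rcases fin2_cases x2 with h | h; exact h; exact absurd (by rw [h]) hc2
  simp_all

lemma mod_step (n j k : ℕ) (h2 : 2 ≤ n) (hj : j < n) (hk : k < n)
    (h : (n - 1 + j) % n = k) : j = (k + 1) % n := by
  rcases Nat.eq_zero_or_pos j with rfl | hj1
  · rw [Nat.add_zero, Nat.mod_eq_of_lt (by omega)] at h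
    rw [show k + 1 = n by omega, Nat.mod_self]
  · rw [show n - 1 + j = j - 1 + n by omega, Nat.add_mod_right,
      Nat.mod_eq_of_lt (by omega)] at h
    rw [show k + 1 = j by omega, Nat.mod_eq_of_lt hj]

lemma count2 (w : List (Fin 2)) (i j : ℕ) (h : i < j) (hj : j < w.length)
    (hi1 : w[i]? = some 1) (hj1 : w[j]? = some 1) : 2 ≤ w.count 1 := by
  rw [← take_append_drop j w, count_append]
  have m1 : (1 : Fin 2) ∈ w.take j := by
    have h1 : (w.take j)[i]? = some 1 := by rw [getElem?_take, if_pos h]; exact hi1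
    obtain ⟨hlt, he⟩ := List.getElem?_eq_some_iff.mp h1
    exact he ▸ getElem_mem hlt
  have m2 : (1 : Fin 2) ∈ w.drop j := by
    have h1 : (w.drop j)[0]? = some 1 := by rw [getElem?_drop]; simpa using hj1
    obtain ⟨hlt, he⟩ := List.getElem?_eq_some_iff.mp h1
    exact he ▸ getElem_mem hlt
  have c1 := count_pos_iff.mpr m1
  have c2 := count_pos_iff.mpr m2
  omega

lemma main_count (S : Finset ℕ) (n a b : ℕ) (hnab : n = a + b + 6)
    (hmem : ∀ j ∈ S, j < n)
    (hblocked : ∀ j ∈ S, j ≠ a + 1 ∧ j ≠ a + 2 ∧ j ≠ a + b + 4 ∧ j ≠ a + b + 5)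
    (hadj : ∀ j, j ∈ S → (j + 1) ∈ S → False) :
    S.card ≤ (n - 6) / 2 + 2 := by
  classical
  have h1 : (S.filter (fun j => j ≤ a)).card ≤ (a + 1 + 1) / 2 := by
    apply sparse_card _ 0 (a + 1)
    · intro j hj
      rw [Finset.mem_filter] at hj
      omega
    · intro j hj hj1
      rw [Finset.mem_filter] at hj hj1
      exact hadj j hj.1 hj1.1
  have h2 : (S.filter (fun j => ¬ j ≤ a)).card ≤ (b + 1 + 1) / 2 := by
    apply sparse_card _ (a + 3) (b + 1)
    · intro j hj
      rw [Finset.mem_filter] at hj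
      obtain ⟨hjS, hja⟩ := hj
      have := hmem j hjS
      have := hblocked j hjS
      omega
    · intro j hj hj1
      rw [Finset.mem_filter] at hj hj1
      exact hadj j hj.1 hj1.1
  have h3 := Finset.card_filter_add_card_filter_not (s := S) (p := fun j => j ≤ a)
  omega

theorem stmt18 (s t : List (Fin 2)) (hs : s ≠ []) (ht : t ≠ []) (n : ℕ)
    (w' : List (Fin 2)) (hw : w' = s ++ [0, 0, 0] ++ t ++ [0, 0, 0])
    (hn : w'.length = n) (h6 : 6 < n) :
    Bordered ([0, 0] ++ t ++ [0, 0, 0] ++ s ++ [0]) ∧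
    Bordered ([0] ++ t ++ [0, 0, 0] ++ s ++ [0, 0]) ∧
    Bordered ([0, 0] ++ s ++ [0, 0, 0] ++ t ++ [0]) ∧
    Bordered ([0] ++ s ++ [0, 0, 0] ++ t ++ [0, 0]) ∧
    nuc w' ≤ (n - 6) / 2 + 2 ∧ (n - 6) / 2 + 2 < n / 2 := by
  classical
  have hlen6 : n = s.length + t.length + 6 := by
    rw [← hn, hw]
    simp only [length_append, length_cons, length_nil]
    omega
  refine ⟨?_, ?_, ?_, ?_, ?_, by omega⟩
  · rw [show ([0, 0] ++ t ++ [0, 0, 0] ++ s ++ [0] : List (Fin 2))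
        = 0 :: (([0] ++ t ++ [0, 0, 0] ++ s) ++ [0]) by simp]
    exact bordered_single _ _
  · rw [show ([0] ++ t ++ [0, 0, 0] ++ s ++ [0, 0] : List (Fin 2))
        = 0 :: ((t ++ [0, 0, 0] ++ s ++ [0]) ++ [0]) by simp]
    exact bordered_single _ _
  · rw [show ([0, 0] ++ s ++ [0, 0, 0] ++ t ++ [0] : List (Fin 2))
        = 0 :: (([0] ++ s ++ [0, 0, 0] ++ t) ++ [0]) by simp]
    exact bordered_single _ _
  · rw [show ([0] ++ s ++ [0, 0, 0] ++ t ++ [0, 0] : List (Fin 2))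
        = 0 :: ((s ++ [0, 0, 0] ++ t ++ [0]) ++ [0]) by simp]
    exact bordered_single _ _
  -- the nuc bound
  have hb1 : Bordered (w'.rotate (s.length + 1)) := by
    have h' : w' = (s ++ [0]) ++ ([0, 0] ++ t ++ [0, 0, 0]) := by rw [hw]; simp
    rw [h', show s.length + 1 = (s ++ [0]).length by simp, rot_app,
      show (([0, 0] ++ t ++ [0, 0, 0]) ++ (s ++ [0]) : List (Fin 2))
        = 0 :: (([0] ++ t ++ [0, 0, 0] ++ s) ++ [0]) by simp]
    exact bordered_single _ _
  have hb2 : Bordered (w'.rotate (s.length + 2)) := by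
    have h' : w' = (s ++ [0, 0]) ++ ([0] ++ t ++ [0, 0, 0]) := by rw [hw]; simp
    rw [h', show s.length + 2 = (s ++ [0, 0]).length by simp, rot_app,
      show (([0] ++ t ++ [0, 0, 0]) ++ (s ++ [0, 0]) : List (Fin 2))
        = 0 :: ((t ++ [0, 0, 0] ++ s ++ [0]) ++ [0]) by simp]
    exact bordered_single _ _
  have hb3 : Bordered (w'.rotate (s.length + t.length + 4)) := by
    have h' : w' = (s ++ [0, 0, 0] ++ t ++ [0]) ++ [0, 0] := by rw [hw]; simp
    rw [h', show s.length + t.length + 4 = (s ++ [0, 0, 0] ++ t ++ [0]).length by simp; omega,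
      rot_app,
      show (([0, 0] : List (Fin 2)) ++ (s ++ [0, 0, 0] ++ t ++ [0]))
        = 0 :: (([0] ++ s ++ [0, 0, 0] ++ t) ++ [0]) by simp]
    exact bordered_single _ _
  have hb4 : Bordered (w'.rotate (s.length + t.length + 5)) := by
    have h' : w' = (s ++ [0, 0, 0] ++ t ++ [0, 0]) ++ [0] := by rw [hw]; simp
    rw [h', show s.length + t.length + 5 = (s ++ [0, 0, 0] ++ t ++ [0, 0]).length by simp; omega,
      rot_app,
      show (([0] : List (Fin 2)) ++ (s ++ [0, 0, 0] ++ t ++ [0, 0]))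
        = 0 :: ((s ++ [0, 0, 0] ++ t ++ [0]) ++ [0]) by simp]
    exact bordered_single _ _
  have hcount0 : 2 ≤ w'.count 0 := by
    rw [hw]
    simp only [count_append]
    have : count (0 : Fin 2) [0, 0, 0] = 3 := by decide
    omega
  unfold nuc
  set S := (Finset.range w'.length).filter (fun i => Unbordered (w'.rotate i)) with hS
  have hmemS : ∀ j ∈ S, j < n ∧ Unbordered (w'.rotate j) := by
    intro j hj
    rw [hS, Finset.mem_filter, Finset.mem_range, hn] at hj
    exact hj
  by_cases hO2 : 2 ≤ ((Finset.range n).filter (fun i => w'[i]? = some 1)).card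
  · -- main case
    obtain ⟨i, hi, j, hj, hij⟩ := Finset.one_lt_card.mp
      (show 1 < ((Finset.range n).filter (fun i => w'[i]? = some 1)).card by omega)
    rw [Finset.mem_filter, Finset.mem_range] at hi hj
    have h1count : 2 ≤ w'.count 1 := by
      rcases lt_or_gt_of_ne hij with h | h
      · exact count2 w' i j h (by omega) hi.2 hj.2
      · exact count2 w' j i h (by omega) hj.2 hi.2
    apply main_count S n s.length t.length (by omega) (fun j hj => (hmemS j hj).1)
    · intro j hj
      have hu := (hmemS j hj).2
      refine ⟨?_, ?_, ?_, ?_⟩ <;> rintro rfl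
      · exact hu hb1
      · exact hu hb2
      · exact hu hb3
      · exact hu hb4
    · intro j hj hj1
      exact noadj w' hcount0 h1count j (hmemS j hj).2 (hmemS (j + 1) hj1).2
  · -- at most one position with letter 1
    have hcard2 : S.card ≤ 2 := by
      set O := (Finset.range n).filter (fun i => w'[i]? = some 1) with hOdef
      have hkeyO : ∀ j ∈ S, j ∈ O ∨ (n - 1 + j) % n ∈ O := by
        intro j hj
        obtain ⟨hjn, hju⟩ := hmemS j hj
        rcases unb_key w' n hn (by omega) j hjn hju with h | h
        · left; rw [hOdef, Finset.mem_filter, Finset.mem_range]; exact ⟨hjn, h⟩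
        · right; rw [hOdef, Finset.mem_filter, Finset.mem_range]
          exact ⟨Nat.mod_lt _ (by omega), h⟩
      rcases O.eq_empty_or_nonempty with hOe | ⟨k, hk⟩
      · have : S = ∅ := by
          apply Finset.eq_empty_of_forall_notMem
          intro j hj
          rcases hkeyO j hj with h | h <;> simp [hOe] at h
        simp [this]
      · have hkn : k < n := by
          rw [hOdef, Finset.mem_filter, Finset.mem_range] at hk; exact hk.1
        have huniq : ∀ x ∈ O, x = k := by
          intro x hx
          by_contra hne
          exact hO2 (Finset.one_lt_card.mpr ⟨x, hx, k, hk, hne⟩)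
        have hsub : S ⊆ insert k {(k + 1) % n} := by
          intro j hj
          obtain ⟨hjn, _⟩ := hmemS j hj
          rcases hkeyO j hj with h | h
          · simp [huniq j h]
          · have := huniq _ h
            have := mod_step n j k (by omega) hjn hkn this
            simp [this]
        calc S.card ≤ (insert k ({(k + 1) % n} : Finset ℕ)).card := Finset.card_le_card hsub
          _ ≤ 2 := le_trans (Finset.card_insert_le _ _) (by simp)
    omega
end
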